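/- For any set Γ of PL-formulas and any PL-formulas α, β: Kh Γ ⊨ Kh(α→β) if and only if Kh Γ ⊨ Kh α → Kh β, where Kh Γ = {Kh γ : γ ∈ Γ}. In particular (taking Γ = ∅), ⊨ Kh(α→β) iff ⊨ Kh α → Kh β. -/

import Mathlib

/-- Formulas of the propositional language `PL` over atoms `P`. -/
inductive PLForm (P : Type) : Type
  | atom : P → PLForm P
  | bot  : PLForm P
  | and  : PLForm P → PLForm P → PLForm P
  | or   : PLForm P → PLForm P → PLForm P
  | imp  : PLForm P → PLForm P → PLForm P

/-- `¬α` abbreviates `α → ⊥`. -/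
def PLForm.neg {P : Type} (α : PLForm P) : PLForm P := α.imp .bot

/-- The resolution space `S(α)`, realized as a type: `S(p)` and `S(⊥)` are
singletons, `S(α∨β)` is the disjoint union, `S(α∧β)` the product, and
`S(α→β)` the full function space. -/
def RS (P : Type) : PLForm P → Type
  | .atom _  => Unit
  | .bot     => Unit
  | .or a b  => RS P a ⊕ RS P b
  | .and a b => RS P a × RS P b
  | .imp a b => RS P a → RS P b

/-- An epistemic (information) model over atoms `P` with worlds `W`:
`W` is nonempty and `V` a valuation. -/
structure Model (P W : Type) where
  ne : Nonempty W
  V : W → Set P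

/-- The actual resolutions `R(w,α) ⊆ S(α)` at a world `w`. -/
def Res {P W : Type} (M : Model P W) (w : W) : (α : PLForm P) → Set (RS P α)
  | .atom p  => {_u : Unit | p ∈ M.V w}
  | .bot     => ∅
  | .or a b  => (Sum.inl '' Res M w a) ∪ (Sum.inr '' Res M w b)
  | .and a b => (Res M w a) ×ˢ (Res M w b)
  | .imp a b => {f : RS P a → RS P b | f '' Res M w a ⊆ Res M w b}

/-- Formulas of the dynamic epistemic language `DELKh`. -/
inductive DForm (P : Type) : Type
  | atom : P → DForm P
  | bot  : DForm P
  | and  : DForm P → DForm P → DForm P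
  | or   : DForm P → DForm P → DForm P
  | imp  : DForm P → DForm P → DForm P
  | K    : DForm P → DForm P
  | box  : DForm P → DForm P
  | kh   : PLForm P → DForm P

def DForm.neg {P : Type} (φ : DForm P) : DForm P := φ.imp .bot
def DForm.dia {P : Type} (φ : DForm P) : DForm P := (DForm.box φ.neg).neg
def DForm.biImp {P : Type} (φ ψ : DForm P) : DForm P := (φ.imp ψ).and (ψ.imp φ)

/-- Embedding of `PL` into `DELKh`. -/
def PLForm.toD {P : Type} : PLForm P → DForm P
  | .atom p  => .atom p
  | .bot     => .bot
  | .and a b => (toD a).and (toD b)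
  | .or a b  => (toD a).or (toD b)
  | .imp a b => (toD a).imp (toD b)

/-- The submodel of `M` determined by a nonempty set `s` of worlds,
with the restricted valuation. -/
def Model.restrict {P W : Type} (M : Model P W) (s : Set W) (h : s.Nonempty) :
    Model P s :=
  { ne := ⟨⟨h.choose, h.choose_spec⟩⟩, V := fun w => M.V w.1 }

/-- Satisfaction of `DELKh`-formulas at a pointed model `(M,w)`. -/
def Sat (P : Type) : (W : Type) → Model P W → W → DForm P → Prop
  | _, M, w, .atom p  => p ∈ M.V w
  | _, _, _, .bot     => False
  | W, M, w, .and a b => Sat P W M w a ∧ Sat P W M w b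
  | W, M, w, .or a b  => Sat P W M w a ∨ Sat P W M w b
  | W, M, w, .imp a b => Sat P W M w a → Sat P W M w b
  | W, M, _, .K φ     => ∀ v : W, Sat P W M v φ
  | W, M, w, .box φ   =>
      ∀ (s : Set W) (h : w ∈ s), Sat P s (M.restrict s ⟨w, h⟩) ⟨w, h⟩ φ
  | W, M, _, .kh α    => ∃ x : RS P α, ∀ v : W, x ∈ Res M v α

/-- A `DELKh`-formula is valid if it holds at every pointed model. -/
def Valid {P : Type} (φ : DForm P) : Prop :=
  ∀ (W : Type) (M : Model P W) (w : W), Sat P W M w φ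

/-- Semantic entailment from a set of `DELKh`-formulas. -/
def EntailsSet {P : Type} (Γ : Set (DForm P)) (φ : DForm P) : Prop :=
  ∀ (W : Type) (M : Model P W) (w : W),
    (∀ ψ ∈ Γ, Sat P W M w ψ) → Sat P W M w φ

/-- Classical satisfaction of `PL`-formulas at a pointed model. -/
def PLSat {P W : Type} (M : Model P W) (w : W) : PLForm P → Prop
  | .atom p  => p ∈ M.V w
  | .bot     => False
  | .and a b => PLSat M w a ∧ PLSat M w b
  | .or a b  => PLSat M w a ∨ PLSat M w b
  | .imp a b => PLSat M w a → PLSat M w b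

/-- Inquisitive support of `PL`-formulas at a state `s` of a model `M`. -/
def Support (P W : Type) (M : Model P W) : Set W → PLForm P → Prop
  | s, .atom p  => ∀ w ∈ s, p ∈ M.V w
  | s, .bot     => s = ∅
  | s, .and a b => Support P W M s a ∧ Support P W M s b
  | s, .or a b  => Support P W M s a ∨ Support P W M s b
  | s, .imp a b => ∀ t ⊆ s, Support P W M t a → Support P W M t b

lemma rs_nonempty {P : Type} : ∀ α : PLForm P, Nonempty (RS P α)
  | .atom _ => ⟨()⟩
  | .bot => ⟨()⟩
  | .or a _ => (rs_nonempty a).elim fun x => ⟨Sum.inl x⟩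
  | .and a b => (rs_nonempty a).elim fun x => (rs_nonempty b).elim fun y => ⟨(x, y)⟩
  | .imp _ b => (rs_nonempty b).elim fun y => ⟨fun _ => y⟩

/-- `Res` only depends on the local valuation. -/
lemma res_congr {P W W' : Type} {M : Model P W} {M' : Model P W'} {w : W} {w' : W'}
    (h : M.V w = M'.V w') : ∀ α : PLForm P, Res M w α = Res M' w' α
  | .atom p => by simp [Res, h]
  | .bot => rfl
  | .or a b => by simp only [Res, res_congr h a, res_congr h b]
  | .and a b => by simp only [Res, res_congr h a, res_congr h b]; rfl
  | .imp a b => by simp only [Res, res_congr h a, res_congr h b]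

/-- The hard direction, abstracted over a set `Δ` of `Kh`-premises. -/
lemma kh_imp_hard {P : Type} (Δ : Set (PLForm P)) (α β : PLForm P)
    (H : ∀ (W : Type) (M : Model P W), Nonempty W →
      (∀ γ ∈ Δ, ∃ x : RS P γ, ∀ v, x ∈ Res M v γ) →
      (∃ x : RS P α, ∀ v, x ∈ Res M v α) → ∃ y : RS P β, ∀ v, y ∈ Res M v β)
    (W : Type) (M : Model P W)
    (hΔ : ∀ γ ∈ Δ, ∃ x : RS P γ, ∀ v, x ∈ Res M v γ) :
    ∃ f : RS P α → RS P β, ∀ v, f ∈ Res M v (α.imp β) := by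
  classical
  have key : ∀ x : RS P α, (∃ v : W, x ∈ Res M v α) →
      ∃ y : RS P β, ∀ v : W, x ∈ Res M v α → y ∈ Res M v β := by
    intro x hx
    set s : Set W := {v | x ∈ Res M v α} with hs
    have hne : Nonempty s := ⟨⟨hx.choose, hx.choose_spec⟩⟩
    let M' : Model P s := ⟨hne, fun v => M.V v.1⟩
    have hres : ∀ (γ : PLForm P) (v : s), Res M v.1 γ = Res M' v γ :=
      fun γ v => res_congr (M := M) (M' := M') (w := v.1) (w' := v) rfl γ
    have hΔ' : ∀ γ ∈ Δ, ∃ y : RS P γ, ∀ v : s, y ∈ Res M' v γ := by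
      intro γ hγ
      obtain ⟨y, hy⟩ := hΔ γ hγ
      exact ⟨y, fun v => (hres γ v) ▸ hy v.1⟩
    have hα : ∃ z : RS P α, ∀ v : s, z ∈ Res M' v α :=
      ⟨x, fun v => (hres α v) ▸ v.2⟩
    obtain ⟨y, hy⟩ := H s M' hne hΔ' hα
    exact ⟨y, fun v hv => (hres β ⟨v, hv⟩) ▸ hy ⟨v, hv⟩⟩
  choose g hg using key
  have hβne := rs_nonempty (P := P) β
  refine ⟨fun x => if h : ∃ v : W, x ∈ Res M v α then g x h else hβne.some, fun v => ?_⟩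
  show _ ∈ {f : RS P α → RS P β | f '' Res M v α ⊆ Res M v β}
  rintro y ⟨x, hx, rfl⟩
  have h : ∃ v : W, x ∈ Res M v α := ⟨v, hx⟩
  simpa [dif_pos h] using hg x h v hx

/-- `Kh Γ ⊨ Kh(α→β)` iff `Kh Γ ⊨ Kh α → Kh β`; in particular
(`Γ = ∅`), `⊨ Kh(α→β)` iff `⊨ Kh α → Kh β`. -/
theorem kh_imp_entailment {P : Type} [Countable P] (Γ : Set (PLForm P))
    (α β : PLForm P) :
    (EntailsSet (DForm.kh '' Γ) (.kh (α.imp β)) ↔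
      EntailsSet (DForm.kh '' Γ) ((DForm.kh α).imp (.kh β))) ∧
    (Valid (DForm.kh (α.imp β)) ↔ Valid ((DForm.kh α).imp (.kh β))) := by
  constructor
  · constructor
    · -- Kh(α→β) entails Khα → Khβ, pointwise
      intro E W M w hprem
      intro hα
      obtain ⟨f, hf⟩ := E W M w hprem
      obtain ⟨x, hx⟩ := hα
      exact ⟨f x, fun v => hf v ⟨x, hx v, rfl⟩⟩
    · intro E W M w hprem
      have hΔ : ∀ γ ∈ Γ, ∃ x : RS P γ, ∀ v, x ∈ Res M v γ :=
        fun γ hγ => hprem (.kh γ) ⟨γ, hγ, rfl⟩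
      refine kh_imp_hard Γ α β ?_ W M hΔ
      intro W' M' hne hΔ' hα
      exact E W' M' hne.some (by rintro ψ ⟨γ, hγ, rfl⟩; exact hΔ' γ hγ) hα
  · constructor
    · intro E W M w hα
      obtain ⟨f, hf⟩ := E W M w
      obtain ⟨x, hx⟩ := hα
      exact ⟨f x, fun v => hf v ⟨x, hx v, rfl⟩⟩
    · intro E W M w
      refine kh_imp_hard ∅ α β ?_ W M (by simp)
      intro W' M' hne _ hα
      exact E W' M' hne.some hα
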